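/- If L is a countable normal (bounded, distributive, separative) lattice, then its Wallman space wL is a compact metrizable space. -/
import Mathlib


open Set TopologicalSpace FirstOrder

universe u v

/-- An ultrafilter on an abstract bounded lattice `L` (in the Wallman sense). -/
structure LatUltra (L : Type u) [Lattice L] [BoundedOrder L] where
  sets : Set L
  top_mem : ⊤ ∈ sets
  bot_notMem : ⊥ ∉ sets
  inf_mem : ∀ a ∈ sets, ∀ b ∈ sets, a ⊓ b ∈ sets
  superset_mem : ∀ a ∈ sets, ∀ b : L, a ≤ b → b ∈ sets
  ultra : ∀ a : L, a ∉ sets → ∃ b ∈ sets, a ⊓ b = ⊥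

/-- The Wallman topology on the space of lattice ultrafilters: the sets `â = {u : a ∈ u}`
form a base for closed sets. -/
instance LatUltra.instTopologicalSpace (L : Type u) [Lattice L] [BoundedOrder L] :
    TopologicalSpace (LatUltra L) :=
  TopologicalSpace.generateFrom {s | ∃ a : L, s = {u : LatUltra L | a ∈ u.sets}ᶜ}

/-- A lattice is normal. -/
def LatNormal (L : Type u) [Lattice L] [BoundedOrder L] : Prop :=
  ∀ a b : L, a ⊓ b = ⊥ → ∃ c d : L, c ⊔ d = ⊤ ∧ c ⊓ a = ⊥ ∧ d ⊓ b = ⊥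

/-- A lattice is separative: whenever `a ≰ b` there is `c` with `c ⊓ a ≠ ⊥` and `c ⊓ b = ⊥`. -/
def LatSeparative (L : Type u) [Lattice L] [BoundedOrder L] : Prop :=
  ∀ a b : L, ¬ a ≤ b → ∃ c : L, c ⊓ a ≠ ⊥ ∧ c ⊓ b = ⊥

/-- A proper filter on a bounded lattice. -/
def IsLatFilter {L : Type u} [Lattice L] [BoundedOrder L] (F : Set L) : Prop :=
  ⊤ ∈ F ∧ ⊥ ∉ F ∧ (∀ a ∈ F, ∀ b ∈ F, a ⊓ b ∈ F) ∧ (∀ a ∈ F, ∀ b : L, a ≤ b → b ∈ F)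

/-- Every proper filter extends to a lattice ultrafilter (Zorn). -/
lemma exists_latUltra_extend {L : Type u} [Lattice L] [BoundedOrder L] {F0 : Set L}
    (h : IsLatFilter F0) : ∃ u : LatUltra L, F0 ⊆ u.sets := by
  obtain ⟨M, hF0M', hmax⟩ := zorn_subset_nonempty {G : Set L | IsLatFilter G ∧ F0 ⊆ G}
    (fun c hc hchain hne => by
      refine ⟨⋃₀ c, ⟨⟨?_, ?_, ?_, ?_⟩, ?_⟩, fun G hG => subset_sUnion_of_mem hG⟩
      · obtain ⟨G, hG⟩ := hne
        exact ⟨G, hG, (hc hG).1.1⟩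
      · rintro ⟨G, hG, hbot⟩
        exact (hc hG).1.2.1 hbot
      · rintro a ⟨G1, hG1, ha⟩ b ⟨G2, hG2, hb⟩
        rcases hchain.total hG1 hG2 with h12 | h21
        · exact ⟨G2, hG2, (hc hG2).1.2.2.1 a (h12 ha) b hb⟩
        · exact ⟨G1, hG1, (hc hG1).1.2.2.1 a ha b (h21 hb)⟩
      · rintro a ⟨G, hG, ha⟩ b hab
        exact ⟨G, hG, (hc hG).1.2.2.2 a ha b hab⟩
      · obtain ⟨G, hG⟩ := hne
        exact (hc hG).2.trans (subset_sUnion_of_mem hG)) F0 ⟨h, subset_rfl⟩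
  obtain ⟨⟨htop, hbot, hinf, hup⟩, hF0M⟩ := hmax.prop
  refine ⟨⟨M, htop, hbot, hinf, hup, ?_⟩, hF0M⟩
  intro a ha
  by_contra hcon
  push_neg at hcon
  set M' : Set L := {x | ∃ b ∈ M, a ⊓ b ≤ x} with hM'
  have hMM' : M ⊆ M' := fun b hb => ⟨b, hb, inf_le_right⟩
  have hM'filter : IsLatFilter M' := by
    refine ⟨hMM' htop, ?_, ?_, ?_⟩
    · rintro ⟨b, hb, hle⟩
      exact hcon b hb (le_bot_iff.mp hle)
    · rintro x ⟨b1, hb1, h1⟩ y ⟨b2, hb2, h2⟩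
      exact ⟨b1 ⊓ b2, hinf b1 hb1 b2 hb2,
        le_inf (le_trans (inf_le_inf_left a inf_le_left) h1)
               (le_trans (inf_le_inf_left a inf_le_right) h2)⟩
    · rintro x ⟨b, hb, hx⟩ y hxy
      exact ⟨b, hb, hx.trans hxy⟩
  have hsub : M' ⊆ M := hmax.2 ⟨hM'filter, hF0M.trans hMM'⟩ hMM'
  exact ha (hsub ⟨⊤, htop, inf_le_left⟩)

/-- The Wallman space of a countable normal (bounded, distributive,
separative) lattice is compact and metrizable. -/
theorem wallman_countable_compact_metrizable (L : Type u) [DistribLattice L]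
    [BoundedOrder L] [Countable L] (hsep : LatSeparative L) (hnorm : LatNormal L) :
    CompactSpace (LatUltra L) ∧ TopologicalSpace.MetrizableSpace (LatUltra L) := by
  -- basic closed sets
  set g : Set (Set (LatUltra L)) := {s | ∃ a : L, s = {u : LatUltra L | a ∈ u.sets}ᶜ} with hg
  have htop_eq : (LatUltra.instTopologicalSpace L) = TopologicalSpace.generateFrom g := rfl
  have hopen : ∀ a : L, IsOpen ({u : LatUltra L | a ∈ u.sets}ᶜ) := fun a =>
    TopologicalSpace.GenerateOpen.basic _ ⟨a, rfl⟩
  -- ultrafilters are prime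
  have hprime : ∀ (w : LatUltra L) (c d : L), c ⊔ d ∈ w.sets → c ∈ w.sets ∨ d ∈ w.sets := by
    intro w c d hcd
    by_contra hcon
    push_neg at hcon
    obtain ⟨b1, hb1, hcb1⟩ := w.ultra c hcon.1
    obtain ⟨b2, hb2, hdb2⟩ := w.ultra d hcon.2
    have hb : b1 ⊓ b2 ∈ w.sets := w.inf_mem b1 hb1 b2 hb2
    have : (c ⊔ d) ⊓ (b1 ⊓ b2) = ⊥ := by
      rw [inf_sup_right]
      rw [le_bot_iff.mp (sup_le
        (le_trans (inf_le_inf_left c inf_le_left) hcb1.le)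
        (le_trans (inf_le_inf_left d inf_le_right) hdb2.le))]
    exact w.bot_notMem (this ▸ w.inf_mem _ hcd _ hb)
  -- compactness
  haveI hcompact : CompactSpace (LatUltra L) := by
    refine ⟨?_⟩
    rw [isCompact_iff_ultrafilter_le_nhds]
    intro F _
    have hF0 : IsLatFilter {a : L | {w : LatUltra L | a ∈ w.sets} ∈ F} := by
      refine ⟨?_, ?_, ?_, ?_⟩
      · have : {w : LatUltra L | (⊤:L) ∈ w.sets} = univ :=
          eq_univ_of_forall fun w => w.top_mem
        show {w : LatUltra L | (⊤:L) ∈ w.sets} ∈ F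
        rw [this]
        exact F.toFilter.univ_sets
      · intro hb
        have : {w : LatUltra L | (⊥:L) ∈ w.sets} = ∅ :=
          eq_empty_of_forall_notMem fun w => w.bot_notMem
        exact F.toFilter.empty_notMem (this ▸ hb)
      · intro a ha b hb
        have : {w : LatUltra L | a ⊓ b ∈ w.sets}
            = {w : LatUltra L | a ∈ w.sets} ∩ {w : LatUltra L | b ∈ w.sets} := by
          ext w
          constructor
          · intro hw
            exact ⟨w.superset_mem _ hw a inf_le_left, w.superset_mem _ hw b inf_le_right⟩
          · intro hw
            exact w.inf_mem a hw.1 b hw.2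
        show {w : LatUltra L | a ⊓ b ∈ w.sets} ∈ F
        rw [this]
        exact F.toFilter.inter_sets ha hb
      · intro a ha b hab
        exact F.toFilter.sets_of_superset ha fun w hw => w.superset_mem a hw b hab
    obtain ⟨u, hu⟩ := exists_latUltra_extend hF0
    refine ⟨u, mem_univ u, ?_⟩
    rw [htop_eq, nhds_generateFrom]
    refine le_iInf fun s => le_iInf ?_
    rintro ⟨hus, a, rfl⟩
    rw [Filter.le_principal_iff, Ultrafilter.mem_coe, Ultrafilter.compl_mem_iff_notMem]
    intro hmem
    exact hus (hu hmem)
  -- Hausdorff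
  haveI ht2 : T2Space (LatUltra L) := by
    refine ⟨fun u v huv => ?_⟩
    have hne : u.sets ≠ v.sets := by
      intro h
      apply huv
      cases u; cases v; simpa using h
    have key : ∀ (u v : LatUltra L), ∀ a : L, a ∈ u.sets → a ∉ v.sets →
        ∃ s t : Set (LatUltra L), IsOpen s ∧ IsOpen t ∧ u ∈ s ∧ v ∈ t ∧ Disjoint s t := by
      intro u v a hau hav
      obtain ⟨b, hbv, hab⟩ := v.ultra a hav
      obtain ⟨c, d, hcd, hca, hdb⟩ := hnorm a b hab
      refine ⟨{w : LatUltra L | c ∈ w.sets}ᶜ, {w : LatUltra L | d ∈ w.sets}ᶜ,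
        hopen c, hopen d, ?_, ?_, ?_⟩
      · intro hc
        exact u.bot_notMem (hca ▸ u.inf_mem c hc a hau)
      · intro hd
        exact v.bot_notMem (hdb ▸ v.inf_mem d hd b hbv)
      · rw [Set.disjoint_left]
        intro w hcw hdw
        apply hdw
        rcases hprime w c d (hcd ▸ w.top_mem) with h | h
        · exact absurd h hcw
        · exact h
    by_cases hsub : u.sets ⊆ v.sets
    · have : ¬ v.sets ⊆ u.sets := fun h => hne (Set.Subset.antisymm hsub h)
      obtain ⟨a, hav, hau⟩ := not_subset.mp this
      obtain ⟨s, t, hs, ht, hvs, hut, hd⟩ := key v u a hav hau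
      exact ⟨t, s, ht, hs, hut, hvs, hd.symm⟩
    · obtain ⟨a, hau, hav⟩ := not_subset.mp hsub
      exact key u v a hau hav
  -- second countable
  haveI hsc : SecondCountableTopology (LatUltra L) := by
    refine ⟨⟨g, ?_, htop_eq⟩⟩
    have : g = Set.range (fun a : L => {u : LatUltra L | a ∈ u.sets}ᶜ) := by
      ext s; simp [hg, eq_comm, Set.range]
    rw [this]
    exact countable_range _
  exact ⟨hcompact, inferInstance⟩
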